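/- Let n ≥ 2 and define r*_n(x) := −1/(2(n−1)) + √((n/(n−1))·x² + 1/(4(n−1)²)) for x ∈ [0,1], which satisfies 0 ≤ r*_n(x) ≤ 1. Let V*_n be the King operator V*_n f(x) := ∑_{k=0}^n C(n,k)·(r*_n(x))^k·(1 − r*_n(x))^{n−k}·f(k/n). Then for all f, g : [0,1] → ℝ and all x ∈ [0,1], |V*_n(f·g)(x) − V*_n f(x)·V*_n g(x)| ≤ (n/(2(n+1)))·osc_{V*_n}(f)·osc_{V*_n}(g), where osc_{V*_n}(f) := max{|f(k/n) − f(l/n)| : 0 ≤ k < l ≤ n} and similarly for g. -/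

import Mathlib

/-- The King function `r*_n(x) = -1/(2(n-1)) + √((n/(n-1)) x² + 1/(4(n-1)²))` for `n ≥ 2`. -/
noncomputable def kingR (n : ℕ) (x : ℝ) : ℝ :=
  -1 / (2 * ((n : ℝ) - 1)) +
    Real.sqrt (((n : ℝ) / ((n : ℝ) - 1)) * x ^ 2 + 1 / (4 * ((n : ℝ) - 1) ^ 2))

/-- The King-type operator `V*_n f(x) = ∑_{k=0}^n C(n,k) r*_n(x)^k (1-r*_n(x))^(n-k) f(k/n)`. -/
noncomputable def kingOp (n : ℕ) (f : ℝ → ℝ) (x : ℝ) : ℝ :=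
  ∑ k ∈ Finset.range (n + 1),
    (n.choose k : ℝ) * (kingR n x) ^ k * (1 - kingR n x) ^ (n - k) * f (k / n)

lemma gruss_aux (s : Finset ℕ) (p F G : ℕ → ℝ)
    (hp : ∀ k ∈ s, 0 ≤ p k) (hps : ∑ k ∈ s, p k = 1)
    (Mf Mg : ℝ) (hMf : 0 ≤ Mf) (hMg : 0 ≤ Mg)
    (hF : ∀ k ∈ s, ∀ l ∈ s, k ≠ l → |F k - F l| ≤ Mf)
    (hG : ∀ k ∈ s, ∀ l ∈ s, k ≠ l → |G k - G l| ≤ Mg) :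
    |∑ k ∈ s, p k * (F k * G k) - (∑ k ∈ s, p k * F k) * (∑ k ∈ s, p k * G k)|
      ≤ (1/2) * (1 - ∑ k ∈ s, (p k)^2) * (Mf * Mg) := by
  set L := ∑ k ∈ s, p k * (F k * G k) - (∑ k ∈ s, p k * F k) * (∑ k ∈ s, p k * G k) with hL
  have e1 : ∑ k ∈ s, ∑ l ∈ s, p k * p l * (F k * G k) = ∑ k ∈ s, p k * (F k * G k) := by
    refine Finset.sum_congr rfl fun k _ => ?_
    calc ∑ l ∈ s, p k * p l * (F k * G k) = ∑ l ∈ s, (p k * (F k * G k)) * p l :=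
          Finset.sum_congr rfl fun l _ => by ring
      _ = (p k * (F k * G k)) * ∑ l ∈ s, p l := by rw [← Finset.mul_sum]
      _ = p k * (F k * G k) := by rw [hps, mul_one]
  have e2 : ∑ k ∈ s, ∑ l ∈ s, p k * p l * (F k * G l)
      = (∑ k ∈ s, p k * F k) * (∑ k ∈ s, p k * G k) := by
    rw [Finset.sum_mul_sum]
    exact Finset.sum_congr rfl fun k _ => Finset.sum_congr rfl fun l _ => by ring
  have h1 : L = ∑ k ∈ s, ∑ l ∈ s, p k * p l * (F k * G k - F k * G l) := by
    rw [hL, ← e1, ← e2, ← Finset.sum_sub_distrib]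
    refine Finset.sum_congr rfl fun k _ => ?_
    rw [← Finset.sum_sub_distrib]
    exact Finset.sum_congr rfl fun l _ => by ring
  have h2 : ∑ k ∈ s, ∑ l ∈ s, p k * p l * (F k * G k - F k * G l)
      = ∑ k ∈ s, ∑ l ∈ s, p k * p l * (F l * G l - F l * G k) := by
    rw [Finset.sum_comm]
    exact Finset.sum_congr rfl fun k _ => Finset.sum_congr rfl fun l _ => by ring
  have hadd : ∑ k ∈ s, ∑ l ∈ s, p k * p l * ((F k - F l) * (G k - G l))
      = (∑ k ∈ s, ∑ l ∈ s, p k * p l * (F k * G k - F k * G l))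
        + ∑ k ∈ s, ∑ l ∈ s, p k * p l * (F l * G l - F l * G k) := by
    rw [← Finset.sum_add_distrib]
    refine Finset.sum_congr rfl fun k _ => ?_
    rw [← Finset.sum_add_distrib]
    exact Finset.sum_congr rfl fun l _ => by ring
  have key : L = (1/2) * ∑ k ∈ s, ∑ l ∈ s, p k * p l * ((F k - F l) * (G k - G l)) := by
    rw [hadd, ← h2, ← h1]; ring
  set C := Mf * Mg with hC
  have hC0 : 0 ≤ C := mul_nonneg hMf hMg
  have hterm : ∀ k ∈ s, ∀ l ∈ s,
      |p k * p l * ((F k - F l) * (G k - G l))|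
        ≤ p k * p l * C - (if k = l then p k * p l * C else 0) := by
    intro k hk l hl
    by_cases hkl : k = l
    · simp [hkl]
    · simp only [hkl, if_false, sub_zero]
      have hpk := hp k hk; have hpl := hp l hl
      have : |p k * p l * ((F k - F l) * (G k - G l))|
          = (p k * p l) * (|F k - F l| * |G k - G l|) := by
        rw [abs_mul, abs_mul, abs_mul, abs_of_nonneg hpk, abs_of_nonneg hpl]
      rw [this, hC]
      exact mul_le_mul_of_nonneg_left
        (mul_le_mul (hF k hk l hl hkl) (hG k hk l hl hkl) (abs_nonneg _) hMf)
        (mul_nonneg hpk hpl)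
  have hsum_bound : ∑ k ∈ s, ∑ l ∈ s,
      (p k * p l * C - (if k = l then p k * p l * C else 0))
      = (1 - ∑ k ∈ s, (p k)^2) * C := by
    have d1 : ∑ k ∈ s, ∑ l ∈ s, p k * p l * C = C := by
      calc ∑ k ∈ s, ∑ l ∈ s, p k * p l * C
          = ∑ k ∈ s, (p k * C) * ∑ l ∈ s, p l := by
            refine Finset.sum_congr rfl fun k _ => ?_
            rw [Finset.mul_sum]
            exact Finset.sum_congr rfl fun l _ => by ring
        _ = ∑ k ∈ s, p k * C := by rw [hps]; simp
        _ = (∑ k ∈ s, p k) * C := by rw [Finset.sum_mul]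
        _ = C := by rw [hps, one_mul]
    have d2 : ∑ k ∈ s, ∑ l ∈ s, (if k = l then p k * p l * C else 0)
        = (∑ k ∈ s, (p k)^2) * C := by
      rw [Finset.sum_mul]
      refine Finset.sum_congr rfl fun k hk => ?_
      rw [Finset.sum_ite_eq s k (fun l => p k * p l * C), if_pos hk]
      ring
    simp only [Finset.sum_sub_distrib]
    rw [d1, d2]; ring
  have habs : |L| ≤ (1/2) * ((1 - ∑ k ∈ s, (p k)^2) * C) := by
    rw [key, abs_mul, abs_of_nonneg (by norm_num : (0:ℝ) ≤ 1/2)]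
    refine mul_le_mul_of_nonneg_left ?_ (by norm_num)
    calc |∑ k ∈ s, ∑ l ∈ s, p k * p l * ((F k - F l) * (G k - G l))|
        ≤ ∑ k ∈ s, |∑ l ∈ s, p k * p l * ((F k - F l) * (G k - G l))| :=
          Finset.abs_sum_le_sum_abs _ _
      _ ≤ ∑ k ∈ s, ∑ l ∈ s, |p k * p l * ((F k - F l) * (G k - G l))| :=
          Finset.sum_le_sum fun k _ => Finset.abs_sum_le_sum_abs _ _
      _ ≤ ∑ k ∈ s, ∑ l ∈ s, (p k * p l * C - (if k = l then p k * p l * C else 0)) :=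
          Finset.sum_le_sum fun k hk => Finset.sum_le_sum fun l hl => hterm k hk l hl
      _ = (1 - ∑ k ∈ s, (p k)^2) * C := hsum_bound
  calc |L| ≤ (1/2) * ((1 - ∑ k ∈ s, (p k)^2) * C) := habs
    _ = (1/2) * (1 - ∑ k ∈ s, (p k)^2) * C := by ring

lemma kingR_mem (n : ℕ) (hn : 2 ≤ n) (x : ℝ) (hx : x ∈ Set.Icc (0:ℝ) 1) :
    0 ≤ kingR n x ∧ kingR n x ≤ 1 := by
  obtain ⟨hx0, hx1⟩ := hx
  unfold kingR
  have h2n : (2:ℝ) ≤ (n:ℝ) := by exact_mod_cast hn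
  set a : ℝ := (n:ℝ) - 1 with ha
  have ha1 : (1:ℝ) ≤ a := by simp [ha]; linarith
  have ha0 : (0:ℝ) < a := by linarith
  have hna : (n:ℝ) = a + 1 := by simp [ha]
  set E := ((n:ℝ)/a) * x^2 + 1/(4*a^2) with hE
  have hE0 : 0 ≤ ((n:ℝ)/a) * x^2 := by positivity
  have hElb : 1/(4*a^2) ≤ E := by rw [hE]; linarith
  have hsq : Real.sqrt (1/(4*a^2)) = 1/(2*a) := by
    rw [show 1/(4*a^2) = (1/(2*a))^2 by field_simp; ring]
    exact Real.sqrt_sq (by positivity)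
  have hs1 : 1/(2*a) ≤ Real.sqrt E := by
    have h := Real.sqrt_le_sqrt hElb
    rw [hsq] at h; exact h
  constructor
  · have : -1/(2*a) + 1/(2*a) ≤ -1/(2*a) + Real.sqrt E := by linarith
    simpa using this.trans_eq' (by ring)
  · have hx2 : x^2 ≤ 1 := by nlinarith
    have hub : E ≤ (1 + 1/(2*a))^2 := by
      have hq : (1+1/(2*a))^2 = 1 + 1/a + 1/(4*a^2) := by field_simp; ring
      have hna' : (n:ℝ)/a = 1 + 1/a := by rw [hna]; field_simp
      have h1a : 0 < 1/a := by positivity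
      have h1 : ((n:ℝ)/a)*x^2 ≤ 1 + 1/a := by rw [hna']; nlinarith
      rw [hE, hq]; linarith
    have h := Real.sqrt_le_sqrt hub
    rw [Real.sqrt_sq (by positivity)] at h
    have hneg : -1/(2*a) = -(1/(2*a)) := by ring
    rw [hneg]
    linarith

lemma osc_facts (n : ℕ) (hn : 1 ≤ n) (f : ℝ → ℝ) :
    0 ≤ sSup {d : ℝ | ∃ k l : ℕ, k < l ∧ l ≤ n ∧ d = |f (k / n) - f (l / n)|} ∧
    ∀ k l : ℕ, k ≤ n → l ≤ n → k ≠ l →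
      |f (k / n) - f (l / n)| ≤
        sSup {d : ℝ | ∃ k l : ℕ, k < l ∧ l ≤ n ∧ d = |f (k / n) - f (l / n)|} := by
  set S := {d : ℝ | ∃ k l : ℕ, k < l ∧ l ≤ n ∧ d = |f (k / n) - f (l / n)|} with hS
  have hfin : S.Finite := by
    have hsub : S ⊆ (fun kl : ℕ × ℕ => |f (kl.1 / n) - f (kl.2 / n)|) ''
        (Set.Iic n ×ˢ Set.Iic n) := by
      rintro d ⟨k, l, hkl, hln, rfl⟩
      exact ⟨(k, l), ⟨(hkl.le.trans hln), hln⟩, rfl⟩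
    exact (((Set.finite_Iic n).prod (Set.finite_Iic n)).image _).subset hsub
  have hbdd : BddAbove S := hfin.bddAbove
  have hmem : ∀ k l : ℕ, k < l → l ≤ n → |f (k / n) - f (l / n)| ∈ S :=
    fun k l h1 h2 => ⟨k, l, h1, h2, rfl⟩
  have hle : ∀ k l : ℕ, k ≤ n → l ≤ n → k ≠ l →
      |f (k / n) - f (l / n)| ≤ sSup S := by
    intro k l hk hl hne
    rcases lt_or_gt_of_ne hne with h | h
    · exact le_csSup hbdd (hmem k l h hl)
    · rw [abs_sub_comm]; exact le_csSup hbdd (hmem l k h hk)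
  refine ⟨?_, hle⟩
  calc (0:ℝ) ≤ |f ((0:ℕ) / n) - f ((1:ℕ) / n)| := abs_nonneg _
    _ ≤ sSup S := le_csSup hbdd (hmem 0 1 one_pos (by omega))

/-- For `n ≥ 2`, `0 ≤ r*_n ≤ 1` on `[0,1]` and the new Chebyshev-Grüss-type inequality for
the King-type operator holds. -/
theorem king_chebyshev_gruss (n : ℕ) (hn : 2 ≤ n)
    (f g : ℝ → ℝ) (x : ℝ) (hx : x ∈ Set.Icc (0:ℝ) 1) :
    (0 ≤ kingR n x ∧ kingR n x ≤ 1) ∧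
    |kingOp n (fun t => f t * g t) x - kingOp n f x * kingOp n g x| ≤
      ((n : ℝ) / (2 * ((n : ℝ) + 1))) *
        sSup {d : ℝ | ∃ k l : ℕ, k < l ∧ l ≤ n ∧ d = |f (k / n) - f (l / n)|} *
        sSup {d : ℝ | ∃ k l : ℕ, k < l ∧ l ≤ n ∧ d = |g (k / n) - g (l / n)|} := by
  obtain ⟨hr0, hr1⟩ := kingR_mem n hn x hx
  refine ⟨⟨hr0, hr1⟩, ?_⟩
  set r := kingR n x with hr
  set p : ℕ → ℝ := fun k => (n.choose k : ℝ) * r ^ k * (1 - r) ^ (n - k) with hpdef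
  have hp : ∀ k ∈ Finset.range (n+1), 0 ≤ p k := by
    intro k _
    exact mul_nonneg (mul_nonneg (Nat.cast_nonneg _) (pow_nonneg hr0 _))
      (pow_nonneg (by linarith) _)
  have hps : ∑ k ∈ Finset.range (n+1), p k = 1 := by
    have h := add_pow r (1 - r) n
    have h1 : (r + (1 - r)) = 1 := by ring
    rw [h1, one_pow] at h
    rw [show ∑ k ∈ Finset.range (n+1), p k
        = ∑ k ∈ Finset.range (n+1), r ^ k * (1 - r) ^ (n - k) * (n.choose k : ℝ) from
      Finset.sum_congr rfl fun k _ => by rw [hpdef]; ring, ← h]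
  set Mf := sSup {d : ℝ | ∃ k l : ℕ, k < l ∧ l ≤ n ∧ d = |f (k / n) - f (l / n)|} with hMf
  set Mg := sSup {d : ℝ | ∃ k l : ℕ, k < l ∧ l ≤ n ∧ d = |g (k / n) - g (l / n)|} with hMg
  obtain ⟨hMf0, hMfle⟩ := osc_facts n (by omega) f
  obtain ⟨hMg0, hMgle⟩ := osc_facts n (by omega) g
  have hF : ∀ k ∈ Finset.range (n+1), ∀ l ∈ Finset.range (n+1), k ≠ l →
      |(fun k : ℕ => f (k / n)) k - (fun k : ℕ => f (k / n)) l| ≤ Mf := by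
    intro k hk l hl hne
    exact hMfle k l (Nat.lt_succ_iff.mp (Finset.mem_range.mp hk))
      (Nat.lt_succ_iff.mp (Finset.mem_range.mp hl)) hne
  have hG : ∀ k ∈ Finset.range (n+1), ∀ l ∈ Finset.range (n+1), k ≠ l →
      |(fun k : ℕ => g (k / n)) k - (fun k : ℕ => g (k / n)) l| ≤ Mg := by
    intro k hk l hl hne
    exact hMgle k l (Nat.lt_succ_iff.mp (Finset.mem_range.mp hk))
      (Nat.lt_succ_iff.mp (Finset.mem_range.mp hl)) hne
  have main := gruss_aux (Finset.range (n+1)) p (fun k : ℕ => f (k / n))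
    (fun k : ℕ => g (k / n)) hp hps Mf Mg hMf0 hMg0 hF hG
  have hopfg : kingOp n (fun t => f t * g t) x
      = ∑ k ∈ Finset.range (n+1), p k * (f (k / n) * g (k / n)) := rfl
  have hopf : kingOp n f x = ∑ k ∈ Finset.range (n+1), p k * f (k / n) := rfl
  have hopg : kingOp n g x = ∑ k ∈ Finset.range (n+1), p k * g (k / n) := rfl
  have hcs : 1 ≤ ((n:ℝ)+1) * ∑ k ∈ Finset.range (n+1), (p k)^2 := by
    have h := sq_sum_le_card_mul_sum_sq (s := Finset.range (n+1)) (f := p)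
    rw [Finset.card_range, hps] at h
    push_cast at h
    linarith
  have hcoef : (1/2) * (1 - ∑ k ∈ Finset.range (n+1), (p k)^2)
      ≤ (n:ℝ)/(2*((n:ℝ)+1)) := by
    rw [le_div_iff₀ (by positivity)]
    nlinarith [hcs]
  calc |kingOp n (fun t => f t * g t) x - kingOp n f x * kingOp n g x|
      = |∑ k ∈ Finset.range (n+1), p k * (f (k / n) * g (k / n))
          - (∑ k ∈ Finset.range (n+1), p k * f (k / n))
            * (∑ k ∈ Finset.range (n+1), p k * g (k / n))| := by
        rw [hopfg, hopf, hopg]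
    _ ≤ (1/2) * (1 - ∑ k ∈ Finset.range (n+1), (p k)^2) * (Mf * Mg) := main
    _ ≤ ((n:ℝ)/(2*((n:ℝ)+1))) * (Mf * Mg) :=
        mul_le_mul_of_nonneg_right hcoef (mul_nonneg hMf0 hMg0)
    _ = ((n:ℝ)/(2*((n:ℝ)+1))) * Mf * Mg := by ring
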